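/- Let (𝒫₁, …, 𝒫_ℓ) be a nice ordered family of ℓ-tuples of integer polynomials, containing no ℓ-tuple of constant polynomials, with 𝒫_i = (p_{i,1}, …, p_{i,m}) for i = 1,…,ℓ, and suppose deg(p_{1,1}) ≥ 2. Then there exists an ℓ-tuple (p₁, …, p_ℓ) ∈ (𝒫₁, …, 𝒫_ℓ) such that for every sufficiently large h ∈ ℕ, the family (p₁,…,p_ℓ,h)-vdC(𝒫₁,…,𝒫_ℓ) is nice and has strictly smaller type than (𝒫₁, …, 𝒫_ℓ). -/

import Mathlib

open Polynomial

/-- An `ℓ`-tuple of integer polynomials. -/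
abbrev PolyTuple (ℓ : ℕ) := Fin ℓ → Polynomial ℤ

/-- The shift `S_h p = p(t + h)`. -/
noncomputable def polyShift (h : ℕ) (p : Polynomial ℤ) : Polynomial ℤ :=
  p.comp (Polynomial.X + Polynomial.C (h : ℤ))

/-- An `ℓ`-tuple of polynomials is constant when all entries are constant
(the degree of a constant polynomial, including `0`, is `0`). -/
def IsConstTuple {ℓ : ℕ} (t : PolyTuple ℓ) : Prop := ∀ i, (t i).natDegree = 0

/-- The degree of a family of `ℓ`-tuples: the maximum degree of all its polynomials. -/
noncomputable def famDegree {ℓ : ℕ} (F : List (PolyTuple ℓ)) : ℕ :=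
  (F.map fun t => Finset.univ.sup fun i => (t i).natDegree).foldr max 0

/-- `w_{i,j}`: the number of equivalence classes (same degree and leading coefficient)
of polynomials of degree `j` in `𝒫ᵢ' = {p_{i,j} : p_{i,j}` non-constant and `p_{i',j}`
constant for all `i' < i}`. -/
noncomputable def wRow {ℓ : ℕ} (F : List (PolyTuple ℓ)) (i : Fin ℓ) (j : ℕ) : ℕ :=
  (((F.filter fun t => decide
        ((∀ i' : Fin ℓ, i' < i → (t i').natDegree = 0) ∧
          (t i).natDegree ≠ 0 ∧ (t i).natDegree = j)).map
      fun t => (t i).leadingCoeff).dedup).length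

/-- The type of the family relative to degree `d`: the `ℓ × d` matrix `(w_{i,j})`,
row by row, each row listing `w_{i,d}, …, w_{i,1}`; compared lexicographically. -/
noncomputable def typeList {ℓ : ℕ} (d : ℕ) (F : List (PolyTuple ℓ)) : List ℕ :=
  ((List.finRange ℓ).map fun i => (List.range d).map fun k => wRow F i (d - k)).flatten

/-- A family of `ℓ`-tuples `(t₁, …, t_m)` is *nice* if (1) `deg t₁(0) ≥ deg tⱼ(0)`;
(2) `deg t₁(0) > deg tⱼ(i)` for `i ≠ 0`; and (3) `deg (t₁(0) - tⱼ(0)) > deg (t₁(i) - tⱼ(i))`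
for `i ≠ 0` and `j ≥ 2`. -/
def NiceTupleFamily {ℓ : ℕ} [NeZero ℓ] (F : List (PolyTuple ℓ)) : Prop :=
  ∃ t₁ rest, F = t₁ :: rest ∧
    (∀ t ∈ F, (t 0).natDegree ≤ (t₁ 0).natDegree) ∧
    (∀ t ∈ F, ∀ i : Fin ℓ, i ≠ 0 → (t i).natDegree < (t₁ 0).natDegree) ∧
    (∀ t ∈ rest, ∀ i : Fin ℓ, i ≠ 0 → (t₁ i - t i).natDegree < (t₁ 0 - t 0).natDegree)

/-- The van der Corput operation `(p₁,…,p_ℓ,h)-vdC(𝒫₁,…,𝒫_ℓ)`: form the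
shifted-and-translated family and remove all constant `ℓ`-tuples. -/
noncomputable def vdcOp {ℓ : ℕ} (g : PolyTuple ℓ) (h : ℕ) (F : List (PolyTuple ℓ)) :
    List (PolyTuple ℓ) :=
  ((F.map fun t => fun i => polyShift h (t i) - g i) ++
      (F.map fun t => fun i => t i - g i)).filter
    fun t => !decide (∀ i, (t i).natDegree = 0)

lemma natDegree_X_add_Ch (h : ℕ) : (X + Polynomial.C (h : ℤ)).natDegree = 1 :=
  natDegree_X_add_C _

lemma natDegree_polyShift (h : ℕ) (p : Polynomial ℤ) :
    (polyShift h p).natDegree = p.natDegree := by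
  rw [polyShift, natDegree_comp, natDegree_X_add_Ch, mul_one]

lemma leadingCoeff_polyShift (h : ℕ) (p : Polynomial ℤ) :
    (polyShift h p).leadingCoeff = p.leadingCoeff := by
  rw [polyShift, leadingCoeff_comp (by rw [natDegree_X_add_Ch]; exact one_ne_zero)]
  rw [leadingCoeff_X_add_C, one_pow, mul_one]

lemma polyShift_sub (h : ℕ) (p q : Polynomial ℤ) :
    polyShift h (p - q) = polyShift h p - polyShift h q := by
  simp [polyShift, sub_comp]

lemma polyShift_ne_zero (h : ℕ) {p : Polynomial ℤ} (hp : p ≠ 0) : polyShift h p ≠ 0 := by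
  intro h0
  apply hp
  have := leadingCoeff_polyShift h p
  rw [h0] at this
  rw [leadingCoeff_zero] at this
  exact leadingCoeff_eq_zero.mp this.symm

lemma polyShift_const (h : ℕ) {p : Polynomial ℤ} (hp : p.natDegree = 0) :
    polyShift h p = p := by
  rw [eq_C_of_natDegree_eq_zero hp]
  simp [polyShift]

/-- degree drop of the discrete difference -/
lemma natDegree_polyShift_sub_lt (h : ℕ) {p : Polynomial ℤ} (hp : 1 ≤ p.natDegree) :
    (polyShift h p - p).natDegree < p.natDegree := by
  have hp0 : p ≠ 0 := fun h0 => by simp [h0] at hp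
  by_cases hz : polyShift h p - p = 0
  · rw [hz]; simp; omega
  · have hdeg : (polyShift h p).degree = p.degree := by
      rw [degree_eq_natDegree (polyShift_ne_zero h hp0), degree_eq_natDegree hp0,
        natDegree_polyShift]
    have := degree_sub_lt hdeg (polyShift_ne_zero h hp0) (leadingCoeff_polyShift h p)
    rw [degree_eq_natDegree (polyShift_ne_zero h hp0), natDegree_polyShift,
      ← degree_eq_natDegree hp0] at this
    exact natDegree_lt_natDegree hz this

lemma natDegree_polyShift_sub_le (h : ℕ) (p : Polynomial ℤ) {n : ℕ}
    (hp : p.natDegree ≤ n + 1) : (polyShift h p - p).natDegree ≤ n := by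
  rcases Nat.eq_zero_or_pos p.natDegree with h0 | h1
  · rw [polyShift_const h h0]; simp
  · exact Nat.lt_succ_iff.mp (lt_of_lt_of_le (natDegree_polyShift_sub_lt h h1) hp)

/-- The key eventual-degree lemma: if `deg p = n+1` and `deg (p - q) ≤ n`, then for all
large `h`, `deg (S_h p - q) = n` exactly. -/
lemma eventual_degree {p q : Polynomial ℤ} {n : ℕ} (hp : p.natDegree = n + 1)
    (hpq : (p - q).natDegree ≤ n) :
    ∃ h₀ : ℕ, 1 ≤ h₀ ∧ ∀ h : ℕ, h₀ ≤ h →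
      (polyShift h p - q).natDegree = n ∧ polyShift h p - q ≠ 0 := by
  have hp0 : p ≠ 0 := fun h0 => by simp [h0] at hp
  set D := Polynomial.hasseDeriv n p with hD
  have hD1 : D.natDegree ≤ 1 := by
    have h2 := Polynomial.natDegree_hasseDeriv_le p n
    rw [← hD] at h2
    omega
  set B : ℤ := D.coeff 1 with hB
  set A : ℤ := D.coeff 0 - q.coeff n with hA
  have hBval : B = ((n : ℤ) + 1) * p.leadingCoeff := by
    rw [hB, hD, Polynomial.hasseDeriv_coeff]
    rw [Polynomial.leadingCoeff, hp]
    have : (1 + n).choose n = n + 1 := by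
      rw [Nat.add_comm 1 n, Nat.choose_succ_self_right]
    rw [this]
    push_cast
    rw [Nat.add_comm 1 n]
  have hBne : B ≠ 0 := by
    rw [hBval]
    refine mul_ne_zero (by positivity) ?_
    exact Polynomial.leadingCoeff_ne_zero.mpr hp0
  have hcoeff : ∀ h : ℕ, (polyShift h p - q).coeff n = B * h + A := by
    intro h
    have hps : polyShift h p = Polynomial.taylor ((h : ℕ) : ℤ) p := by
      rw [Polynomial.taylor_apply]; rfl
    have h1 : (polyShift h p).coeff n = D.eval ((h : ℕ) : ℤ) := by
      rw [hps, Polynomial.taylor_coeff]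
    have h2 : D.eval ((h : ℕ) : ℤ) = B * h + A + q.coeff n := by
      conv_lhs => rw [Polynomial.eq_X_add_C_of_natDegree_le_one hD1]
      simp [hA, hB]
      ring
    rw [Polynomial.coeff_sub, h1, h2]
    ring
  refine ⟨A.natAbs + 1, by omega, fun h hh => ?_⟩
  have hne : (polyShift h p - q).coeff n ≠ 0 := by
    rw [hcoeff h]
    intro h0
    have h1 : A = -(B * h) := by linarith
    have h2 : A.natAbs = B.natAbs * h := by
      rw [h1, Int.natAbs_neg, Int.natAbs_mul, Int.natAbs_natCast]
    have h3 : 1 ≤ B.natAbs := Int.natAbs_pos.mpr hBne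
    nlinarith [h2, h3, hh]
  have hub : (polyShift h p - q).natDegree ≤ n := by
    have heq : polyShift h p - q = (polyShift h p - p) + (p - q) := by ring
    rw [heq]
    refine le_trans (Polynomial.natDegree_add_le _ _) (max_le ?_ hpq)
    exact natDegree_polyShift_sub_le h p (le_of_eq hp)
  have hlb : n ≤ (polyShift h p - q).natDegree := Polynomial.le_natDegree_of_ne_zero hne
  refine ⟨le_antisymm hub hlb, fun h0 => hne ?_⟩
  rw [h0]; simp

/-- Subtracting a polynomial of smaller degree preserves degree and leading coeff. -/
lemma sub_small_natDegree {p q : Polynomial ℤ} (h : q.natDegree < p.natDegree) :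
    (p - q).natDegree = p.natDegree ∧ (p - q).leadingCoeff = p.leadingCoeff := by
  have hp0 : p ≠ 0 := fun h0 => by simp [h0] at h
  have hdq : q.degree < p.degree := by
    refine lt_of_le_of_lt (Polynomial.degree_le_natDegree) ?_
    rw [Polynomial.degree_eq_natDegree hp0]
    exact_mod_cast h
  exact ⟨Polynomial.natDegree_sub_eq_left_of_natDegree_lt h,
    Polynomial.leadingCoeff_sub_of_degree_lt hdq⟩

/-- Subtracting two polynomials of the same degree and leading coeff drops the degree. -/
lemma sub_same_class_natDegree {p q : Polynomial ℤ} (h1 : 1 ≤ p.natDegree)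
    (hd : p.natDegree = q.natDegree) (hl : p.leadingCoeff = q.leadingCoeff) :
    (p - q).natDegree < p.natDegree := by
  have hp0 : p ≠ 0 := fun h0 => by simp [h0] at h1
  have hq0 : q ≠ 0 := fun h0 => by rw [h0] at hd; simp at hd; omega
  by_cases hz : p - q = 0
  · rw [hz]; simp; omega
  · have hdeg : p.degree = q.degree := by
      rw [Polynomial.degree_eq_natDegree hp0, Polynomial.degree_eq_natDegree hq0]
      exact_mod_cast hd
    exact natDegree_lt_natDegree hz (Polynomial.degree_sub_lt hdeg hp0 hl)

/-- Subtracting two polynomials of the same degree and distinct leading coeffs. -/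
lemma sub_diff_class_natDegree {p q : Polynomial ℤ} {m : ℕ}
    (hp : p.natDegree = m) (hq : q.natDegree = m) (hl : p.leadingCoeff ≠ q.leadingCoeff) :
    (p - q).natDegree = m ∧ (p - q).leadingCoeff = p.leadingCoeff - q.leadingCoeff := by
  have hcm : (p - q).coeff m = p.leadingCoeff - q.leadingCoeff := by
    rw [Polynomial.coeff_sub, Polynomial.leadingCoeff, Polynomial.leadingCoeff, hp, hq]
  have hne : (p - q).coeff m ≠ 0 := by rw [hcm]; exact sub_ne_zero_of_ne hl
  have hub : (p - q).natDegree ≤ m := by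
    refine le_trans (Polynomial.natDegree_sub_le _ _) ?_
    rw [hp, hq]; exact max_self m |>.le
  have hdeg : (p - q).natDegree = m :=
    le_antisymm hub (Polynomial.le_natDegree_of_ne_zero hne)
  exact ⟨hdeg, by rw [Polynomial.leadingCoeff, hdeg, hcm]⟩

lemma lex_append_lt (P : List ℕ) {a b : ℕ} (A B : List ℕ) (h : a < b) :
    List.Lex (· < ·) (P ++ a :: A) (P ++ b :: B) := by
  induction P with
  | nil => exact List.Lex.rel h
  | cons x P ih => exact List.Lex.cons ih

lemma exists_uniform_bound {α : Type*} (F : List α) (C : α → ℕ → Prop)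
    (h : ∀ t ∈ F, ∃ h₀ : ℕ, ∀ h' : ℕ, h₀ ≤ h' → C t h') :
    ∃ h₀ : ℕ, ∀ h' : ℕ, h₀ ≤ h' → ∀ t ∈ F, C t h' := by
  induction F with
  | nil => exact ⟨0, fun h' _ t ht => absurd ht List.not_mem_nil⟩
  | cons a F ih =>
    obtain ⟨h₁, hh₁⟩ := h a List.mem_cons_self
    obtain ⟨h₂, hh₂⟩ := ih (fun t ht => h t (List.mem_cons_of_mem a ht))
    refine ⟨max h₁ h₂, fun h' hh' t ht => ?_⟩
    rcases List.mem_cons.mp ht with rfl | ht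
    · exact hh₁ h' (le_trans (le_max_left _ _) hh')
    · exact hh₂ h' (le_trans (le_max_right _ _) hh') t ht

lemma le_famDegree {ℓ : ℕ} {F : List (PolyTuple ℓ)} {t : PolyTuple ℓ} (ht : t ∈ F)
    (i : Fin ℓ) : (t i).natDegree ≤ famDegree F := by
  induction F with
  | nil => exact absurd ht List.not_mem_nil
  | cons a F ih =>
    have hcons : famDegree (a :: F) = max (Finset.univ.sup fun i => (a i).natDegree)
        (famDegree F) := rfl
    rcases List.mem_cons.mp ht with rfl | ht
    · exact le_trans (Finset.le_sup (f := fun i => (t i).natDegree) (Finset.mem_univ i))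
        (by rw [hcons]; exact le_max_left _ _)
    · exact le_trans (ih ht) (by rw [hcons]; exact le_max_right _ _)

/-- The set of leading coefficients counted by `wRow`. -/
noncomputable def lcSet {ℓ : ℕ} (F : List (PolyTuple ℓ)) (i : Fin ℓ) (j : ℕ) : Finset ℤ :=
  ((F.filter fun t => decide
        ((∀ i' : Fin ℓ, i' < i → (t i').natDegree = 0) ∧
          (t i).natDegree ≠ 0 ∧ (t i).natDegree = j)).map
      fun t => (t i).leadingCoeff).toFinset

lemma wRow_eq_card {ℓ : ℕ} (F : List (PolyTuple ℓ)) (i : Fin ℓ) (j : ℕ) :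
    wRow F i j = (lcSet F i j).card := by
  rw [wRow, lcSet, List.card_toFinset]

lemma mem_lcSet_iff {ℓ : ℕ} {F : List (PolyTuple ℓ)} {i : Fin ℓ} {j : ℕ} {c : ℤ} :
    c ∈ lcSet F i j ↔ ∃ t ∈ F, (∀ i' : Fin ℓ, i' < i → (t i').natDegree = 0) ∧
      (t i).natDegree ≠ 0 ∧ (t i).natDegree = j ∧ (t i).leadingCoeff = c := by
  simp only [lcSet, List.mem_toFinset, List.mem_map, List.mem_filter, decide_eq_true_eq]
  constructor
  · rintro ⟨t, ⟨ht, h1, h2, h3⟩, rfl⟩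
    exact ⟨t, ht, h1, h2, h3, rfl⟩
  · rintro ⟨t, ht, h1, h2, h3, rfl⟩
    exact ⟨t, ⟨ht, h1, h2, h3⟩, rfl⟩

lemma mem_vdcOp_iff {ℓ : ℕ} {g : PolyTuple ℓ} {h : ℕ} {F : List (PolyTuple ℓ)}
    {x : PolyTuple ℓ} : x ∈ vdcOp g h F ↔
      ((∃ t ∈ F, x = fun i => polyShift h (t i) - g i) ∨
        (∃ t ∈ F, x = fun i => t i - g i)) ∧ ¬ IsConstTuple x := by
  simp only [vdcOp, List.mem_filter, List.mem_append, List.mem_map, IsConstTuple,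
    Bool.not_eq_true', decide_eq_false_iff_not]
  constructor
  · rintro ⟨(⟨t, ht, rfl⟩ | ⟨t, ht, rfl⟩), hc⟩
    exacts [⟨Or.inl ⟨t, ht, rfl⟩, hc⟩, ⟨Or.inr ⟨t, ht, rfl⟩, hc⟩]
  · rintro ⟨(⟨t, ht, rfl⟩ | ⟨t, ht, rfl⟩), hc⟩
    exacts [⟨Or.inl ⟨t, ht, rfl⟩, hc⟩, ⟨Or.inr ⟨t, ht, rfl⟩, hc⟩]


section TypePart
variable {ℓ : ℕ}

lemma deep_transfer {P q : Polynomial ℤ} (hq : q.natDegree = 0) (hx : (P - q).natDegree = 0) :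
    P.natDegree = 0 := by
  have : P = (P - q) + q := by ring
  rw [this]
  exact le_antisymm (le_trans (Polynomial.natDegree_add_le _ _) (by rw [hq, hx]; simp))
    (Nat.zero_le _)

lemma vdc_source {g : PolyTuple ℓ} {h : ℕ} {F : List (PolyTuple ℓ)} {x : PolyTuple ℓ}
    (hx : x ∈ vdcOp g h F) :
    ∃ t ∈ F, ∀ i, ∃ P : Polynomial ℤ, x i = P - g i ∧ P.natDegree = (t i).natDegree ∧
      P.leadingCoeff = (t i).leadingCoeff := by
  obtain ⟨(⟨t, ht, rfl⟩ | ⟨t, ht, rfl⟩), -⟩ := mem_vdcOp_iff.mp hx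
  · exact ⟨t, ht, fun i => ⟨polyShift h (t i), rfl, natDegree_polyShift h (t i),
      leadingCoeff_polyShift h (t i)⟩⟩
  · exact ⟨t, ht, fun i => ⟨t i, rfl, rfl, rfl⟩⟩

lemma sub_mem_vdc {g : PolyTuple ℓ} {h : ℕ} {F : List (PolyTuple ℓ)} {t : PolyTuple ℓ}
    (ht : t ∈ F) {i : Fin ℓ} (hne : (t i - g i).natDegree ≠ 0) :
    (fun i' => t i' - g i') ∈ vdcOp g h F := by
  refine mem_vdcOp_iff.mpr ⟨Or.inr ⟨t, ht, rfl⟩, fun hc => hne (hc i)⟩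

lemma lcSet_vdc_of_lt {g : PolyTuple ℓ} {h : ℕ} {F : List (PolyTuple ℓ)} {i₀ : Fin ℓ}
    (hdeep : ∀ i' : Fin ℓ, i' < i₀ → (g i').natDegree = 0)
    {i : Fin ℓ} (hi : i < i₀) (j : ℕ) :
    lcSet (vdcOp g h F) i j = lcSet F i j := by
  ext c
  simp only [mem_lcSet_iff]
  constructor
  · rintro ⟨x, hxG, hxdeep, hxne, hxj, hlc⟩
    obtain ⟨t, htF, hsrc⟩ := vdc_source hxG
    obtain ⟨P, hxi, hPd, hPl⟩ := hsrc i
    have htine : (t i).natDegree ≠ 0 := by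
      intro h0
      apply hxne
      rw [hxi]
      exact le_antisymm (le_trans (Polynomial.natDegree_sub_le _ _)
        (by rw [hPd, h0, hdeep i hi]; simp)) (Nat.zero_le _)
    have hsmall := sub_small_natDegree (p := P) (q := g i)
      (by rw [hdeep i hi, hPd]; omega)
    refine ⟨t, htF, fun i' hi' => ?_, htine, ?_, ?_⟩
    · obtain ⟨P', hxi', hPd', hPl'⟩ := hsrc i'
      rw [← hPd']
      exact deep_transfer (hdeep i' (lt_trans hi' hi)) (hxi' ▸ hxdeep i' hi')
    · rw [← hxj, hxi, hsmall.1, hPd]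
    · rw [← hlc, hxi, hsmall.2, hPl]
  · rintro ⟨t, htF, hdeept, htne, htj, hlc⟩
    have hsmall := sub_small_natDegree (p := t i) (q := g i)
      (by rw [hdeep i hi]; omega)
    have hxne : (t i - g i).natDegree ≠ 0 := by rw [hsmall.1]; exact htne
    refine ⟨fun i' => t i' - g i', sub_mem_vdc htF hxne, fun i' hi' => ?_, hxne, ?_, ?_⟩
    · exact le_antisymm (le_trans (Polynomial.natDegree_sub_le _ _)
        (by rw [hdeept i' hi', hdeep i' (lt_trans hi' hi)]; simp)) (Nat.zero_le _)
    · rw [hsmall.1, htj]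
    · rw [hsmall.2, hlc]

section Row0
variable {g : PolyTuple ℓ} {h : ℕ} {F : List (PolyTuple ℓ)} {i₀ : Fin ℓ} {d₀ : ℕ}

/-- Analysis of a member of the new family at row `i₀`. -/
lemma vdc_row_i₀_analysis
    (hdeep : ∀ i' : Fin ℓ, i' < i₀ → (g i').natDegree = 0)
    (hgd : (g i₀).natDegree = d₀) (hd₀ : d₀ ≠ 0)
    (hmin : ∀ t ∈ F, (∀ i' : Fin ℓ, i' < i₀ → (t i').natDegree = 0) → d₀ ≤ (t i₀).natDegree)
    {x : PolyTuple ℓ} (hxG : x ∈ vdcOp g h F)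
    (hxdeep : ∀ i' : Fin ℓ, i' < i₀ → (x i').natDegree = 0)
    (hxne : (x i₀).natDegree ≠ 0) :
    ∃ t ∈ F, (∀ i' : Fin ℓ, i' < i₀ → (t i').natDegree = 0) ∧
      ((d₀ < (t i₀).natDegree ∧ (x i₀).natDegree = (t i₀).natDegree ∧
          (x i₀).leadingCoeff = (t i₀).leadingCoeff) ∨
        ((t i₀).natDegree = d₀ ∧ (t i₀).leadingCoeff ≠ (g i₀).leadingCoeff ∧
          (x i₀).natDegree = d₀ ∧
          (x i₀).leadingCoeff = (t i₀).leadingCoeff - (g i₀).leadingCoeff) ∨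
        (x i₀).natDegree < d₀) := by
  obtain ⟨t, htF, hsrc⟩ := vdc_source hxG
  have hdeept : ∀ i' : Fin ℓ, i' < i₀ → (t i').natDegree = 0 := by
    intro i' hi'
    obtain ⟨P', hxi', hPd', hPl'⟩ := hsrc i'
    rw [← hPd']
    exact deep_transfer (hdeep i' hi') (hxi' ▸ hxdeep i' hi')
  obtain ⟨P, hxi, hPd, hPl⟩ := hsrc i₀
  have hminT : d₀ ≤ (t i₀).natDegree := hmin t htF hdeept
  refine ⟨t, htF, hdeept, ?_⟩
  rcases lt_or_eq_of_le hminT with hgt | heq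
  · -- deg t i₀ > d₀
    have hsmall := sub_small_natDegree (p := P) (q := g i₀) (by omega)
    exact Or.inl ⟨hgt, by rw [hxi, hsmall.1, hPd], by rw [hxi, hsmall.2, hPl]⟩
  · -- deg t i₀ = d₀
    by_cases hlceq : (t i₀).leadingCoeff = (g i₀).leadingCoeff
    · refine Or.inr (Or.inr ?_)
      have := sub_same_class_natDegree (p := P) (q := g i₀) (by omega)
        (by omega) (by rw [hPl, hlceq])
      rw [hxi]; omega
    · have hdiff := sub_diff_class_natDegree (p := P) (q := g i₀) (m := d₀)
        (by omega) hgd (by rw [hPl]; exact hlceq)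
      exact Or.inr (Or.inl ⟨heq.symm, hlceq, by rw [hxi, hdiff.1],
        by rw [hxi, hdiff.2, hPl]⟩)

lemma lcSet_vdc_of_gt
    (hdeep : ∀ i' : Fin ℓ, i' < i₀ → (g i').natDegree = 0)
    (hgd : (g i₀).natDegree = d₀) (hd₀ : d₀ ≠ 0)
    (hmin : ∀ t ∈ F, (∀ i' : Fin ℓ, i' < i₀ → (t i').natDegree = 0) → d₀ ≤ (t i₀).natDegree)
    {j : ℕ} (hj : d₀ < j) :
    lcSet (vdcOp g h F) i₀ j = lcSet F i₀ j := by
  ext c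
  simp only [mem_lcSet_iff]
  constructor
  · rintro ⟨x, hxG, hxdeep, hxne, hxj, hlc⟩
    obtain ⟨t, htF, hdeept, hcase⟩ :=
      vdc_row_i₀_analysis hdeep hgd hd₀ hmin hxG hxdeep hxne
    rcases hcase with ⟨h1, h2, h3⟩ | ⟨h1, h2, h3, h4⟩ | h1
    · exact ⟨t, htF, hdeept, by omega, by omega, by rw [← hlc, h3]⟩
    · omega
    · omega
  · rintro ⟨t, htF, hdeept, htne, htj, hlc⟩
    have hsmall := sub_small_natDegree (p := t i₀) (q := g i₀) (by omega)
    have hxne : (t i₀ - g i₀).natDegree ≠ 0 := by omega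
    refine ⟨fun i' => t i' - g i', sub_mem_vdc htF hxne, fun i' hi' => ?_, hxne,
      (by show (t i₀ - g i₀).natDegree = j; omega), ?_⟩
    · exact le_antisymm (le_trans (Polynomial.natDegree_sub_le _ _)
        (by rw [hdeept i' hi', hdeep i' hi']; simp)) (Nat.zero_le _)
    · rw [hsmall.2, hlc]

lemma lcSet_vdc_card_lt
    (hgF : g ∈ F)
    (hdeep : ∀ i' : Fin ℓ, i' < i₀ → (g i').natDegree = 0)
    (hgd : (g i₀).natDegree = d₀) (hd₀ : d₀ ≠ 0)
    (hmin : ∀ t ∈ F, (∀ i' : Fin ℓ, i' < i₀ → (t i').natDegree = 0) → d₀ ≤ (t i₀).natDegree) :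
    (lcSet (vdcOp g h F) i₀ d₀).card < (lcSet F i₀ d₀).card := by
  have hsub : lcSet (vdcOp g h F) i₀ d₀ ⊆
      (lcSet F i₀ d₀ \ {(g i₀).leadingCoeff}).image
        (fun c => c - (g i₀).leadingCoeff) := by
    intro c hc
    obtain ⟨x, hxG, hxdeep, hxne, hxj, hlc⟩ := mem_lcSet_iff.mp hc
    obtain ⟨t, htF, hdeept, hcase⟩ :=
      vdc_row_i₀_analysis hdeep hgd hd₀ hmin hxG hxdeep hxne
    rcases hcase with ⟨h1, h2, h3⟩ | ⟨h1, h2, h3, h4⟩ | h1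
    · omega
    · refine Finset.mem_image.mpr ⟨(t i₀).leadingCoeff, ?_, by omega⟩
      exact Finset.mem_sdiff.mpr ⟨mem_lcSet_iff.mpr ⟨t, htF, hdeept, by omega, h1, rfl⟩,
        by simp [h2]⟩
    · omega
  have hmem : (g i₀).leadingCoeff ∈ lcSet F i₀ d₀ :=
    mem_lcSet_iff.mpr ⟨g, hgF, hdeep, by omega, hgd, rfl⟩
  calc (lcSet (vdcOp g h F) i₀ d₀).card
      ≤ ((lcSet F i₀ d₀ \ {(g i₀).leadingCoeff}).image
          (fun c => c - (g i₀).leadingCoeff)).card := Finset.card_le_card hsub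
    _ ≤ (lcSet F i₀ d₀ \ {(g i₀).leadingCoeff}).card := Finset.card_image_le
    _ < (lcSet F i₀ d₀).card := by
        rw [Finset.card_sdiff_of_subset (Finset.singleton_subset_iff.mpr hmem)]
        have := Finset.card_pos.mpr ⟨_, hmem⟩
        simp only [Finset.card_singleton]
        omega

end Row0

lemma type_decrease {F : List (PolyTuple ℓ)} {g : PolyTuple ℓ} (hgF : g ∈ F) {i₀ : Fin ℓ}
    {d₀ d : ℕ}
    (hdeep : ∀ i' : Fin ℓ, i' < i₀ → (g i').natDegree = 0)
    (hgd : (g i₀).natDegree = d₀) (hd₀ : d₀ ≠ 0)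
    (hmin : ∀ t ∈ F, (∀ i' : Fin ℓ, i' < i₀ → (t i').natDegree = 0) → d₀ ≤ (t i₀).natDegree)
    (hd₀d : d₀ ≤ d) (h : ℕ) :
    List.Lex (· < ·) (typeList d (vdcOp g h F)) (typeList d F) := by
  have hd1 : 1 ≤ d := le_trans (by omega) hd₀d
  set G := vdcOp g h F with hG
  -- split the list of row indices at i₀
  have hsplitI : List.finRange ℓ = (List.finRange ℓ).take i₀.val ++
      i₀ :: (List.finRange ℓ).drop (i₀.val + 1) := by
    conv_lhs => rw [← List.take_append_drop i₀.val (List.finRange ℓ)]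
    congr 1
    rw [List.drop_eq_getElem_cons (by simp [i₀.isLt])]
    congr 1
    simp
  have htakeI : ∀ i ∈ (List.finRange ℓ).take i₀.val, i < i₀ := by
    intro i hi
    obtain ⟨n, hn, hget⟩ := List.mem_iff_getElem.mp hi
    have hn' : n < i₀.val := by
      have := hn
      simp only [List.length_take, List.length_finRange] at this
      omega
    have : i = ⟨n, lt_trans hn' i₀.isLt⟩ := by
      rw [← hget]
      simp [List.getElem_take]
    rw [this]
    exact hn'
  -- split the row at position d - d₀
  set k₀ := d - d₀ with hk₀
  have hk₀d : k₀ < d := by omega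
  have hsplitR : List.range d = (List.range d).take k₀ ++
      k₀ :: (List.range d).drop (k₀ + 1) := by
    conv_lhs => rw [← List.take_append_drop k₀ (List.range d)]
    congr 1
    rw [List.drop_eq_getElem_cons (by simpa using hk₀d)]
    congr 1
    simp
  have htakeR : ∀ k ∈ (List.range d).take k₀, d₀ < d - k := by
    intro k hk
    rw [List.take_range] at hk
    have := List.mem_range.mp hk
    omega
  have hdk₀ : d - k₀ = d₀ := by omega
  -- the common prefix
  set P₁ := ((((List.finRange ℓ).take i₀.val).map
      fun i => (List.range d).map fun k => wRow F i (d - k)) : List (List ℕ)).flatten with hP₁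
  set pre := ((List.range d).take k₀).map (fun k => wRow F i₀ (d - k)) with hpre
  have key : ∀ L : List (PolyTuple ℓ),
      (∀ i ∈ (List.finRange ℓ).take i₀.val, ∀ j, wRow L i j = wRow F i j) →
      (∀ k ∈ (List.range d).take k₀, wRow L i₀ (d - k) = wRow F i₀ (d - k)) →
      ∃ tail : List ℕ, typeList d L = (P₁ ++ pre) ++ wRow L i₀ d₀ :: tail := by
    intro L h1 h2
    refine ⟨(((List.range d).drop (k₀ + 1)).map fun k => wRow L i₀ (d - k)) ++
      ((((List.finRange ℓ).drop (i₀.val + 1)).map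
        fun i => (List.range d).map fun k => wRow L i (d - k)) : List (List ℕ)).flatten, ?_⟩
    have hrow : (List.range d).map (fun k => wRow L i₀ (d - k)) =
        pre ++ wRow L i₀ d₀ :: ((List.range d).drop (k₀ + 1)).map
          (fun k => wRow L i₀ (d - k)) := by
      conv_lhs => rw [hsplitR]
      rw [List.map_append, List.map_cons, hdk₀]
      congr 1
      exact List.map_congr_left h2
    have hrows : ((List.finRange ℓ).take i₀.val).map
        (fun i => (List.range d).map fun k => wRow L i (d - k)) =
        ((List.finRange ℓ).take i₀.val).map
        (fun i => (List.range d).map fun k => wRow F i (d - k)) := by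
      refine List.map_congr_left fun i hi => List.map_congr_left fun k _ => h1 i hi _
    calc typeList d L
        = (((List.finRange ℓ).map fun i => (List.range d).map fun k => wRow L i (d - k)) :
            List (List ℕ)).flatten := rfl
      _ = _ := by
          conv_lhs => rw [hsplitI]
          rw [List.map_append, List.map_cons, List.flatten_append, List.flatten_cons,
            hrows, hrow, ← hP₁]
          simp [List.append_assoc]
  obtain ⟨tailG, htailG⟩ := key G
    (fun i hi j => by
      rw [wRow_eq_card, wRow_eq_card, lcSet_vdc_of_lt hdeep (htakeI i hi)])
    (fun k hk => by
      rw [wRow_eq_card, wRow_eq_card, lcSet_vdc_of_gt hdeep hgd hd₀ hmin (htakeR k hk)])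
  obtain ⟨tailF, htailF⟩ := key F (fun _ _ _ => rfl) (fun _ _ => rfl)
  rw [htailG, htailF]
  refine lex_append_lt _ _ _ ?_
  rw [wRow_eq_card, wRow_eq_card]
  exact lcSet_vdc_card_lt hgF hdeep hgd hd₀ hmin

end TypePart

section NicePart
variable {ℓ : ℕ} [NeZero ℓ]

/-- Niceness of the vdC family for a suitable choice of `g` and large `h`. -/
lemma nice_vdc {F : List (PolyTuple ℓ)} {t₁ : PolyTuple ℓ} {rest : List (PolyTuple ℓ)}
    (hF : F = t₁ :: rest)
    (c1 : ∀ t ∈ F, (t 0).natDegree ≤ (t₁ 0).natDegree)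
    (c2 : ∀ t ∈ F, ∀ i : Fin ℓ, i ≠ 0 → (t i).natDegree < (t₁ 0).natDegree)
    (c3 : ∀ t ∈ rest, ∀ i : Fin ℓ, i ≠ 0 →
      (t₁ i - t i).natDegree < (t₁ 0 - t 0).natDegree)
    (hd2 : 2 ≤ (t₁ 0).natDegree)
    {g : PolyTuple ℓ} (hgF : g ∈ F)
    (hcase : (t₁ 0 - g 0).natDegree = (t₁ 0).natDegree ∨
      (g = t₁ ∧ ∀ t ∈ F, (t₁ 0 - t 0).natDegree < (t₁ 0).natDegree)) :
    ∃ h₀ : ℕ, ∀ h : ℕ, h₀ ≤ h → NiceTupleFamily (vdcOp g h F) := by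
  classical
  set d := (t₁ 0).natDegree with hd
  -- uniform eventual-degree bound
  have hC : ∀ t ∈ F, ∃ h₀ : ℕ, ∀ h : ℕ, h₀ ≤ h →
      ((t₁ 0 - t 0).natDegree < d →
        (polyShift h (t₁ 0) - t 0).natDegree = d - 1 ∧ polyShift h (t₁ 0) - t 0 ≠ 0) := by
    intro t htF
    by_cases he : (t₁ 0 - t 0).natDegree < d
    · obtain ⟨h₀, -, hh₀⟩ := eventual_degree (p := t₁ 0) (q := t 0) (n := d - 1)
        (by omega) (by omega)
      exact ⟨h₀, fun h hh _ => hh₀ h hh⟩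
    · exact ⟨0, fun h _ hcon => absurd hcon he⟩
  obtain ⟨h₀, hh₀⟩ := exists_uniform_bound F _ hC
  refine ⟨h₀, fun h hh => ?_⟩
  have hCond := hh₀ h hh
  set f₁ : PolyTuple ℓ → PolyTuple ℓ := fun t => fun i => polyShift h (t i) - g i with hf₁
  set f₂ : PolyTuple ℓ → PolyTuple ℓ := fun t => fun i => t i - g i with hf₂
  set x₁ : PolyTuple ℓ := f₁ t₁ with hx₁
  set D := (polyShift h (t₁ 0) - g 0).natDegree with hD
  have hx₁0 : (x₁ 0).natDegree = D := rfl
  -- the degree of the new head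
  have hDval : D = d ∨ (g = t₁ ∧ D = d - 1 ∧ ∀ t ∈ F, (t₁ 0 - t 0).natDegree < d) := by
    rcases hcase with hI | ⟨hgt₁, hII⟩
    · left
      have heq : polyShift h (t₁ 0) - g 0 = (polyShift h (t₁ 0) - t₁ 0) + (t₁ 0 - g 0) := by
        ring
      rw [hD, heq, Polynomial.natDegree_add_eq_right_of_natDegree_lt, hI]
      rw [hI]
      have := natDegree_polyShift_sub_le h (t₁ 0) (n := d - 1) (by omega)
      omega
    · refine Or.inr ⟨hgt₁, ?_, hII⟩
      have := (hCond t₁ (hF ▸ (List.mem_cons_self : t₁ ∈ t₁ :: rest)) (by simp; omega)).1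
      rw [hD, hgt₁]
      exact this
  have hD1 : 1 ≤ D := by rcases hDval with h1 | ⟨-, h1, -⟩ <;> omega
  -- the new family
  have hx₁mem : x₁ ∈ (F.map f₁ ++ F.map f₂) := by
    rw [hF]
    exact List.mem_append_left _ (List.mem_map_of_mem (f := f₁) (List.mem_cons_self : t₁ ∈ t₁ :: rest))
  have hsplit : vdcOp g h F = x₁ :: (rest.map f₁ ++ F.map f₂).filter
      (fun t => !decide (∀ i, (t i).natDegree = 0)) := by
    rw [vdcOp, hF, List.map_cons, List.cons_append, List.filter_cons, ← hF]
    have : (!decide (∀ i, ((f₁ t₁) i).natDegree = 0)) = true := by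
      simp only [Bool.not_eq_true', decide_eq_false_iff_not]
      intro hc
      have := hc 0
      rw [hx₁0] at *
      omega
    rw [if_pos this]
  -- membership helpers
  have memF' : ∀ x ∈ vdcOp g h F, ∃ t ∈ F, x = f₁ t ∨ x = f₂ t := by
    intro x hx
    rcases (mem_vdcOp_iff.mp hx).1 with ⟨t, ht, rfl⟩ | ⟨t, ht, rfl⟩
    exacts [⟨t, ht, Or.inl rfl⟩, ⟨t, ht, Or.inr rfl⟩]
  have memR' : ∀ x ∈ (rest.map f₁ ++ F.map f₂).filter
      (fun t => !decide (∀ i, (t i).natDegree = 0)),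
      (∃ t ∈ rest, x = f₁ t) ∨ (∃ t ∈ F, x = f₂ t) := by
    intro x hx
    rcases List.mem_append.mp (List.mem_of_mem_filter hx) with hx1 | hx2
    · obtain ⟨t, ht, rfl⟩ := List.mem_map.mp hx1
      exact Or.inl ⟨t, ht, rfl⟩
    · obtain ⟨t, ht, rfl⟩ := List.mem_map.mp hx2
      exact Or.inr ⟨t, ht, rfl⟩
  -- bound on differences with the head entries, coordinates i ≠ 0
  have hdiff_i : ∀ t ∈ F, (t₁ 0 - t 0).natDegree ≤ d - 1 →
      ∀ i : Fin ℓ, i ≠ 0 → (t i - t₁ i).natDegree ≤ d - 2 ∧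
      (t₁ i - t i).natDegree ≤ d - 2 := by
    intro t htF het i hi
    have hneg : (t i - t₁ i) = -(t₁ i - t i) := by ring
    rcases List.mem_cons.mp (hF ▸ htF) with rfl | htr
    · constructor <;> simp
    · have h3 := c3 t htr i hi
      have : (t₁ i - t i).natDegree ≤ d - 2 := by omega
      rw [hneg, Polynomial.natDegree_neg]
      exact ⟨this, this⟩
  refine ⟨x₁, _, hsplit, ?_, ?_, ?_⟩
  · -- condition (1)
    intro x hx
    obtain ⟨t, htF, hx12⟩ := memF' x hx
    rw [hx₁0]
    have ht0 : (t 0).natDegree ≤ d := c1 t htF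
    have hg0 : (g 0).natDegree ≤ d := c1 g hgF
    rcases hDval with hDd | ⟨hgt₁, hDd, hall⟩
    · rcases hx12 with rfl | rfl
      · have := Polynomial.natDegree_sub_le (polyShift h (t 0)) (g 0)
        rw [natDegree_polyShift] at this
        show (polyShift h (t 0) - g 0).natDegree ≤ D
        omega
      · have := Polynomial.natDegree_sub_le (t 0) (g 0)
        show (t 0 - g 0).natDegree ≤ D
        omega
    · have he : (t 0 - t₁ 0).natDegree ≤ d - 1 := by
        have := hall t htF
        have hneg : (t 0 - t₁ 0) = -(t₁ 0 - t 0) := by ring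
        rw [hneg, Polynomial.natDegree_neg]
        omega
      rcases hx12 with rfl | rfl
      · show (polyShift h (t 0) - g 0).natDegree ≤ D
        rw [hgt₁]
        have heq : polyShift h (t 0) - t₁ 0 = (polyShift h (t 0) - t 0) + (t 0 - t₁ 0) := by
          ring
        rw [heq]
        have h1 := natDegree_polyShift_sub_le h (t 0) (n := d - 1) (by omega)
        have := Polynomial.natDegree_add_le (polyShift h (t 0) - t 0) (t 0 - t₁ 0)
        omega
      · show (t 0 - g 0).natDegree ≤ D
        rw [hgt₁]
        omega
  · -- condition (2)
    intro x hx i hi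
    obtain ⟨t, htF, hx12⟩ := memF' x hx
    rw [hx₁0]
    have hti : (t i).natDegree < d := c2 t htF i hi
    have hgi : (g i).natDegree < d := c2 g hgF i hi
    rcases hDval with hDd | ⟨hgt₁, hDd, hall⟩
    · rcases hx12 with rfl | rfl
      · have := Polynomial.natDegree_sub_le (polyShift h (t i)) (g i)
        rw [natDegree_polyShift] at this
        show (polyShift h (t i) - g i).natDegree < D
        omega
      · have := Polynomial.natDegree_sub_le (t i) (g i)
        show (t i - g i).natDegree < D
        omega
    · have he := (hdiff_i t htF (by have := hall t htF; omega) i hi).1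
      rcases hx12 with rfl | rfl
      · show (polyShift h (t i) - g i).natDegree < D
        rw [hgt₁]
        have heq : polyShift h (t i) - t₁ i = (polyShift h (t i) - t i) + (t i - t₁ i) := by
          ring
        rw [heq]
        have h1 := natDegree_polyShift_sub_le h (t i) (n := d - 2) (by omega)
        have := Polynomial.natDegree_add_le (polyShift h (t i) - t i) (t i - t₁ i)
        omega
      · show (t i - g i).natDegree < D
        rw [hgt₁]
        omega
  · -- condition (3)
    intro x hx i hi
    rcases memR' x hx with ⟨t, htr, rfl⟩ | ⟨t, htF, rfl⟩
    · -- shifted members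
      have hid : ∀ i' : Fin ℓ, x₁ i' - (f₁ t) i' = polyShift h (t₁ i' - t i') := by
        intro i'
        show (polyShift h (t₁ i') - g i') - (polyShift h (t i') - g i') = _
        rw [polyShift_sub]
        ring
      rw [hid i, hid 0, natDegree_polyShift, natDegree_polyShift]
      exact c3 t htr i hi
    · -- unshifted members
      have hid : ∀ i' : Fin ℓ, x₁ i' - (f₂ t) i' = polyShift h (t₁ i') - t i' := by
        intro i'
        show (polyShift h (t₁ i') - g i') - (t i' - g i') = _
        ring
      rw [hid i, hid 0]
      have ht0 : (t 0).natDegree ≤ d := c1 t htF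
      by_cases he : (t₁ 0 - t 0).natDegree < d
      · -- the shifted head dominates, degree drops to d - 1
        have h0 := (hCond t htF he).1
        rw [h0]
        have heq : polyShift h (t₁ i) - t i = (polyShift h (t₁ i) - t₁ i) + (t₁ i - t i) := by
          ring
        rw [heq]
        have ht₁i : (t₁ i).natDegree < d := c2 t₁ (hF ▸ (List.mem_cons_self : t₁ ∈ t₁ :: rest)) i hi
        have h1 := natDegree_polyShift_sub_le h (t₁ i) (n := d - 2) (by omega)
        have h2 := (hdiff_i t htF (by omega) i hi).2
        have := Polynomial.natDegree_add_le (polyShift h (t₁ i) - t₁ i) (t₁ i - t i)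
        omega
      · -- difference of degree d
        have he' : (t₁ 0 - t 0).natDegree = d := by
          have := Polynomial.natDegree_sub_le (t₁ 0) (t 0)
          omega
        have h0 : (polyShift h (t₁ 0) - t 0).natDegree = d := by
          have heq : polyShift h (t₁ 0) - t 0 =
              (polyShift h (t₁ 0) - t₁ 0) + (t₁ 0 - t 0) := by ring
          rw [heq, Polynomial.natDegree_add_eq_right_of_natDegree_lt, he']
          have := natDegree_polyShift_sub_le h (t₁ 0) (n := d - 1) (by omega)
          omega
        rw [h0]
        have hti : (t i).natDegree < d := c2 t htF i hi
        have ht₁i : (t₁ i).natDegree < d := c2 t₁ (hF ▸ (List.mem_cons_self : t₁ ∈ t₁ :: rest)) i hi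
        have := Polynomial.natDegree_sub_le (polyShift h (t₁ i)) (t i)
        rw [natDegree_polyShift] at this
        omega

end NicePart


/-- **Lemma 5.3.** For a nice family of `ℓ`-tuples of polynomials with
`deg p_{1,1} ≥ 2`, there is an `ℓ`-tuple `(p₁,…,p_ℓ)` in the family such that for all
sufficiently large `h`, the family `(p₁,…,p_ℓ,h)-vdC(𝒫₁,…,𝒫_ℓ)` is nice and has
strictly smaller type. -/
theorem nice_tuple_family_vdc_reduction {ℓ : ℕ} [NeZero ℓ] (F : List (PolyTuple ℓ))
    (hnoconst : ∀ t ∈ F, ¬ IsConstTuple t)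
    (hnice : NiceTupleFamily F)
    (hdeg : 2 ≤ (F.headI 0).natDegree) :
    ∃ g ∈ F, ∃ h₀ : ℕ, ∀ h : ℕ, h₀ ≤ h →
      NiceTupleFamily (vdcOp g h F) ∧
      List.Lex (· < ·) (typeList (famDegree F) (vdcOp g h F))
        (typeList (famDegree F) F) := by
  classical
  obtain ⟨t₁, rest, hF, c1, c2, c3⟩ := hnice
  have hd2 : 2 ≤ (t₁ 0).natDegree := by rwa [hF, List.headI_cons] at hdeg
  set d := (t₁ 0).natDegree with hd
  have ht₁F : t₁ ∈ F := hF ▸ (List.mem_cons_self : t₁ ∈ t₁ :: rest)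
  -- the set of levels
  set S : Finset (Fin ℓ) := Finset.univ.filter
    (fun i => ∃ t ∈ F, (∀ i' : Fin ℓ, i' < i → (t i').natDegree = 0) ∧
      (t i).natDegree ≠ 0) with hS
  have hS0 : (0 : Fin ℓ) ∈ S := by
    refine Finset.mem_filter.mpr ⟨Finset.mem_univ _, t₁, ht₁F, ?_, by omega⟩
    intro i' hi'
    exact absurd hi' (by simp)
  set i₀ : Fin ℓ := S.max' ⟨0, hS0⟩ with hi₀
  -- every tuple that is constant below i₀ is non-constant at i₀
  have hM : ∀ t ∈ F, (∀ i' : Fin ℓ, i' < i₀ → (t i').natDegree = 0) →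
      (t i₀).natDegree ≠ 0 := by
    intro t htF hdeept
    obtain ⟨jw, hjw⟩ : ∃ j : Fin ℓ, (t j).natDegree ≠ 0 := by
      by_contra hcon
      push_neg at hcon
      exact hnoconst t htF (fun i => hcon i)
    set T : Finset (Fin ℓ) := Finset.univ.filter (fun j => (t j).natDegree ≠ 0) with hT
    have hTne : T.Nonempty := ⟨jw, Finset.mem_filter.mpr ⟨Finset.mem_univ _, hjw⟩⟩
    set j := T.min' hTne with hj
    have hjT : (t j).natDegree ≠ 0 := (Finset.mem_filter.mp (T.min'_mem hTne)).2
    have hjdeep : ∀ i' : Fin ℓ, i' < j → (t i').natDegree = 0 := by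
      intro i' hi'
      by_contra hcon
      exact absurd (T.min'_le i' (Finset.mem_filter.mpr ⟨Finset.mem_univ _, hcon⟩))
        (by rw [← hj]; exact not_le_of_gt hi')
    have hjS : j ∈ S := Finset.mem_filter.mpr ⟨Finset.mem_univ _, t, htF, hjdeep, hjT⟩
    have hji₀ : j ≤ i₀ := S.le_max' j hjS
    rcases lt_or_eq_of_le hji₀ with hlt | heq
    · exact absurd (hdeept j hlt) hjT
    · rwa [← heq]
  -- the minimal degree at level i₀
  obtain ⟨tw, htwF, htwdeep, htwne⟩ : ∃ t ∈ F,
      (∀ i' : Fin ℓ, i' < i₀ → (t i').natDegree = 0) ∧ (t i₀).natDegree ≠ 0 := by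
    have := (Finset.mem_filter.mp (S.max'_mem ⟨0, hS0⟩)).2
    exact this
  set Q : ℕ → Prop := fun n => ∃ t ∈ F,
    (∀ i' : Fin ℓ, i' < i₀ → (t i').natDegree = 0) ∧ (t i₀).natDegree = n with hQ
  have hQex : ∃ n, Q n := ⟨(tw i₀).natDegree, tw, htwF, htwdeep, rfl⟩
  set d₀ := Nat.find hQex with hd₀
  obtain ⟨g, hgF, hgdeep, hgd⟩ : Q d₀ := Nat.find_spec hQex
  have hd₀ne : d₀ ≠ 0 := by rw [← hgd]; exact hM g hgF hgdeep
  have hmin : ∀ t ∈ F, (∀ i' : Fin ℓ, i' < i₀ → (t i').natDegree = 0) →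
      d₀ ≤ (t i₀).natDegree := by
    intro t htF hdeept
    by_contra hcon
    exact Nat.find_min hQex (by omega) ⟨t, htF, hdeept, rfl⟩
  have hd₀fam : ∀ g' : PolyTuple ℓ, g' ∈ F → (g' i₀).natDegree = d₀ →
      d₀ ≤ famDegree F := by
    intro g' hg'F hg'd
    rw [← hg'd]
    exact le_famDegree hg'F i₀
  by_cases hex : ∃ g' ∈ F, (∀ i' : Fin ℓ, i' < i₀ → (g' i').natDegree = 0) ∧
      (g' i₀).natDegree = d₀ ∧ (t₁ 0 - g' 0).natDegree = d
  · obtain ⟨g', hg'F, hg'deep, hg'd, hg'case⟩ := hex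
    obtain ⟨h₀, hh₀⟩ := nice_vdc hF c1 c2 c3 hd2 hg'F (Or.inl hg'case)
    exact ⟨g', hg'F, h₀, fun h hh => ⟨hh₀ h hh,
      type_decrease hg'F hg'deep hg'd hd₀ne hmin (hd₀fam g' hg'F hg'd) h⟩⟩
  · -- all candidates are equivalent to the head polynomial
    have ha : (t₁ 0 - g 0).natDegree < d := by
      have hle : (t₁ 0 - g 0).natDegree ≤ d := by
        have := Polynomial.natDegree_sub_le (t₁ 0) (g 0)
        have := c1 g hgF
        omega
      rcases lt_or_eq_of_le hle with hlt | heq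
      · exact hlt
      · exact absurd ⟨g, hgF, hgdeep, hgd, heq⟩ hex
    have hb : (g 0).natDegree = d := by
      by_contra hcon
      have hlt : (g 0).natDegree < d := by
        have := c1 g hgF
        omega
      have := (sub_small_natDegree (p := t₁ 0) (q := g 0) hlt).1
      omega
    have hc : i₀ = 0 := by
      by_contra hcon
      have h0lt : (0 : Fin ℓ) < i₀ := by
        rcases Nat.eq_zero_or_pos i₀.val with hv | hv
        · exact absurd (Fin.ext (by simp [hv])) hcon
        · rw [Fin.lt_def]
          simpa using hv
      have := hgdeep 0 h0lt
      omega
    have hdd₀ : d₀ = d := by rw [← hgd, hc, hb]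
    have he : ∀ t ∈ F, (t₁ 0 - t 0).natDegree < d := by
      intro t htF
      have hle : (t₁ 0 - t 0).natDegree ≤ d := by
        have := Polynomial.natDegree_sub_le (t₁ 0) (t 0)
        have := c1 t htF
        omega
      rcases lt_or_eq_of_le hle with hlt | heq
      · exact hlt
      · exfalso
        have hdeept : ∀ i' : Fin ℓ, i' < i₀ → (t i').natDegree = 0 := by
          intro i' hi'
          rw [hc] at hi'
          exact absurd hi' (by simp)
        have h1 : d₀ ≤ (t i₀).natDegree := hmin t htF hdeept
        have h2 : (t i₀).natDegree ≤ d := by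
          rw [hc]
          exact c1 t htF
        exact hex ⟨t, htF, hdeept, by omega, heq⟩
    have ht₁deep : ∀ i' : Fin ℓ, i' < i₀ → (t₁ i').natDegree = 0 := by
      intro i' hi'
      rw [hc] at hi'
      exact absurd hi' (by simp)
    have ht₁d : (t₁ i₀).natDegree = d₀ := by rw [hc, hdd₀]
    obtain ⟨h₀, hh₀⟩ := nice_vdc hF c1 c2 c3 hd2 ht₁F (Or.inr ⟨rfl, he⟩)
    exact ⟨t₁, ht₁F, h₀, fun h hh => ⟨hh₀ h hh,
      type_decrease ht₁F ht₁deep ht₁d hd₀ne hmin (hd₀fam t₁ ht₁F ht₁d) h⟩⟩
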